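/- Let M = σ ∩ L be a toric monoid, where σ is a pointed rational polyhedral cone in the lattice L. Then the faces of M (submonoids F with a + b ∈ F ⟹ a, b ∈ F) are exactly the subsets of the form τ ∩ L, where τ ranges over the faces of the cone σ; equivalently, the faces of M are exactly the zero-loci in M of ℤ-linear functionals on L that are nonnegative on M. -/

import Mathlib

open Finset

section FarkasSection

variable {V : Type} [AddCommGroup V] [Module ℝ V]

theorem farkas_fin : ∀ (n : ℕ) (v : Fin n → V) (w : V),
    (∃ c : Fin n → ℝ, (∀ i, 0 ≤ c i) ∧ w = ∑ i, c i • v i) ∨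
    ∃ φ : V →ₗ[ℝ] ℝ, (∀ i, 0 ≤ φ (v i)) ∧ φ w < 0 := by
  intro n
  induction n with
  | zero =>
    intro v w
    by_cases hw : w = 0
    · exact Or.inl ⟨0, fun i => le_refl _, by simp [hw]⟩
    · right
      obtain ⟨φ, hφ⟩ := not_forall.mp ((not_iff_not.mpr
        (Module.forall_dual_apply_eq_zero_iff ℝ w)).mpr hw)
      rcases lt_or_gt_of_ne hφ with h | h
      · exact ⟨φ, fun i => i.elim0, h⟩
      · exact ⟨-φ, fun i => i.elim0, by simpa using h⟩
  | succ n ih =>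
    intro v w
    rcases ih (fun i => v i.succ) w with ⟨c, hc, hw⟩ | ⟨φ, hφ, hφw⟩
    · left
      refine ⟨Fin.cons 0 c, fun i => ?_, ?_⟩
      · refine Fin.cases ?_ ?_ i
        · exact le_refl _
        · exact fun j => hc j
      · rw [Fin.sum_univ_succ]
        simp [hw]
    · by_cases h0 : 0 ≤ φ (v 0)
      · right
        refine ⟨φ, fun i => ?_, hφw⟩
        refine Fin.cases h0 hφ i
      · have ha : φ (v 0) < 0 := lt_of_not_ge h0
        have ha' : φ (v 0) ≠ 0 := ne_of_lt ha
        set a : ℝ := φ (v 0) with ha_def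
        -- projection onto ker φ along v 0
        set p : V →ₗ[ℝ] V := LinearMap.id - a⁻¹ • (φ.smulRight (v 0)) with hp_def
        have hp : ∀ u : V, p u = u - (a⁻¹ * φ u) • v 0 := by
          intro u
          simp [hp_def, smul_smul]
        have hpv0 : p (v 0) = 0 := by
          rw [hp]
          rw [← ha_def]
          rw [inv_mul_cancel₀ ha']
          simp
        rcases ih (fun i => p (v i.succ)) (p w) with ⟨c, hc, hpw⟩ | ⟨ψ, hψ, hψw⟩
        · left
          set t : ℝ := a⁻¹ * (φ w - ∑ i, c i * φ (v i.succ)) with ht_def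
          have hsum : 0 ≤ ∑ i, c i * φ (v i.succ) :=
            Finset.sum_nonneg fun i _ => mul_nonneg (hc i) (hφ i)
          have ht : 0 ≤ t := by
            have h1 : φ w - ∑ i, c i * φ (v i.succ) < 0 := by linarith
            have h2 : a⁻¹ < 0 := inv_neg''.mpr ha
            exact le_of_lt (mul_pos_of_neg_of_neg h2 h1)
          refine ⟨Fin.cons t c, fun i => ?_, ?_⟩
          · refine Fin.cases ht hc i
          · rw [Fin.sum_univ_succ]
            simp only [Fin.cons_zero, Fin.cons_succ]
            have e1 : w = p w + (a⁻¹ * φ w) • v 0 := by rw [hp]; abel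
            rw [e1, hpw]
            have e2 : ∀ i : Fin n, c i • p (v i.succ)
                = c i • v i.succ - (c i * (a⁻¹ * φ (v i.succ))) • v 0 := by
              intro i; rw [hp, smul_sub, smul_smul]
            rw [Finset.sum_congr rfl (fun i _ => e2 i), Finset.sum_sub_distrib,
              ← Finset.sum_smul]
            rw [ht_def]
            rw [mul_sub, Finset.mul_sum]
            rw [sub_smul]
            have : ∑ i, c i * (a⁻¹ * φ (v i.succ)) = ∑ i, a⁻¹ * (c i * φ (v i.succ)) := by
              apply Finset.sum_congr rfl; intro i _; ring
            rw [this]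
            abel
        · right
          refine ⟨ψ.comp p, fun i => ?_, ?_⟩
          · refine Fin.cases ?_ ?_ i
            · simp [hpv0]
            · intro j; exact hψ j
          · exact hψw

theorem farkas {ι : Type} [Fintype ι] (v : ι → V) (w : V) :
    (∃ c : ι → ℝ, (∀ i, 0 ≤ c i) ∧ w = ∑ i, c i • v i) ∨
    ∃ φ : V →ₗ[ℝ] ℝ, (∀ i, 0 ≤ φ (v i)) ∧ φ w < 0 := by
  set e := Fintype.equivFin ι with he
  rcases farkas_fin (Fintype.card ι) (v ∘ e.symm) w with ⟨c, hc, hw⟩ | ⟨φ, h1, h2⟩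
  · left
    refine ⟨c ∘ e, fun i => hc _, ?_⟩
    rw [hw]
    refine (Fintype.sum_equiv e _ _ fun i => ?_).symm
    simp
  · right
    refine ⟨φ, fun i => ?_, h2⟩
    simpa using h1 (e i)

end FarkasSection

/-- A face of an additive monoid `M` (realized as a submonoid of an ambient group) is a
submonoid `F ≤ M` such that `a + b ∈ F` implies `a, b ∈ F`. -/
def IsMonoidFace {V : Type} [AddCommGroup V] (M F : AddSubmonoid V) : Prop :=
  F ≤ M ∧ ∀ a b : V, a ∈ M → b ∈ M → a + b ∈ F → a ∈ F ∧ b ∈ F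

/-- For a toric monoid `M = σ ∩ L` (with `σ` a pointed rational polyhedral cone in the
lattice `L`), the faces of `M` are exactly the subsets `τ ∩ L` with `τ` a face of `σ`;
equivalently, the zero loci in `M` of linear functionals that are nonnegative on `σ`. -/
theorem stmt_18 {V : Type} [AddCommGroup V] [Module ℝ V] [FiniteDimensional ℝ V]
    (L : AddSubgroup V) (hLfg : L.FG)
    (σ : PointedCone ℝ V)
    (hrat : ∃ s : Finset V, (s : Set V) ⊆ (L : Set V) ∧
      σ = Submodule.span {c : ℝ // 0 ≤ c} (s : Set V))
    (hpointed : ∀ x : V, x ∈ σ → -x ∈ σ → x = 0)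
    (M : AddSubmonoid V) (hM : (M : Set V) = {x : V | x ∈ L ∧ x ∈ σ})
    (F : AddSubmonoid V) :
    IsMonoidFace M F ↔
      ∃ φ : V →ₗ[ℝ] ℝ, (∀ x ∈ σ, 0 ≤ φ x) ∧ ∀ x : V, (x ∈ F ↔ x ∈ M ∧ φ x = 0) := by
  classical
  obtain ⟨s, hsL, hσ⟩ := hrat
  have hMx : ∀ x : V, x ∈ M ↔ x ∈ L ∧ x ∈ σ := fun x => by
    have := Set.ext_iff.mp hM x
    simpa using this
  have hmemσ : ∀ x : V, x ∈ σ ↔ ∃ c : V → ℝ, (∀ v, 0 ≤ c v) ∧ x = ∑ v ∈ s, c v • v := by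
    intro x
    rw [hσ, Submodule.mem_span_finset]
    constructor
    · rintro ⟨f, -, hf⟩
      exact ⟨fun v => (f v : ℝ), fun v => (f v).2, hf.symm⟩
    · rintro ⟨c, hc, rfl⟩
      exact ⟨fun v => if v ∈ s then ⟨c v, hc v⟩ else 0, fun v hv => by
        by_contra h; exact hv (by simp only [if_neg (show v ∉ s from h)]),
        Finset.sum_congr rfl fun v hv => by simp only [if_pos hv]; rfl⟩
  have hsσ : ∀ v ∈ s, v ∈ σ := fun v hv => by
    rw [hσ]; exact Submodule.subset_span hv
  have hsLmem : ∀ v ∈ s, v ∈ L := fun v hv => hsL hv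
  have hsM : ∀ v ∈ s, v ∈ M := fun v hv => (hMx v).mpr ⟨hsLmem v hv, hsσ v hv⟩
  have hsmulσ : ∀ (r : ℝ), 0 ≤ r → ∀ x ∈ σ, r • x ∈ σ := fun r hr x hx => σ.smul_mem hr hx
  constructor
  · -- hard direction
    intro hF
    set s₀ : Finset V := s.filter (fun v => v ∈ F) with hs₀
    set s₁ : Finset V := s.filter (fun v => v ∉ F) with hs₁
    have hs₀s : s₀ ⊆ s := filter_subset _ _
    have hs₁s : s₁ ⊆ s := filter_subset _ _
    set u₀ : V := ∑ v ∈ s₀, v with hu₀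
    have hu₀F : u₀ ∈ F := AddSubmonoid.sum_mem _ fun v hv => (mem_filter.mp hv).2
    have hu₀L : u₀ ∈ L := AddSubgroup.sum_mem _ fun v hv => hsLmem v (hs₀s hv)
    have hnuF : ∀ n : ℕ, (n : ℝ) • u₀ ∈ F := fun n => by
      rw [Nat.cast_smul_eq_nsmul]
      exact AddSubmonoid.nsmul_mem _ hu₀F n
    have hnuL : ∀ n : ℕ, (n : ℝ) • u₀ ∈ L := fun n => by
      rw [Nat.cast_smul_eq_nsmul]
      exact AddSubgroup.nsmul_mem _ hu₀L n
    -- Lemma A : a lattice point in the cone generated by s₀ lies in F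
    have lemA : ∀ x : V, x ∈ M → ∀ c : V → ℝ, (∀ v, 0 ≤ c v) →
        x = ∑ v ∈ s₀, c v • v → x ∈ F := by
      intro x hxM c hc hx
      obtain ⟨n, hn⟩ := exists_nat_ge (∑ v ∈ s₀, c v)
      have hcb : ∀ v ∈ s₀, c v ≤ (n : ℝ) := fun v hv =>
        le_trans (Finset.single_le_sum (fun i _ => hc i) hv) hn
      have hy : (n : ℝ) • u₀ - x = ∑ v ∈ s₀, ((n : ℝ) - c v) • v := by
        rw [hx, hu₀, Finset.smul_sum, ← Finset.sum_sub_distrib]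
        exact Finset.sum_congr rfl fun v _ => (sub_smul _ _ _).symm
      have hyσ : (n : ℝ) • u₀ - x ∈ σ := by
        rw [hy]
        exact Submodule.sum_mem _ fun v hv =>
          hsmulσ _ (sub_nonneg.mpr (hcb v hv)) v (hsσ v (hs₀s hv))
      have hyM : (n : ℝ) • u₀ - x ∈ M :=
        (hMx _).mpr ⟨AddSubgroup.sub_mem _ (hnuL n) ((hMx x).mp hxM).1, hyσ⟩
      have hsumF : x + ((n : ℝ) • u₀ - x) ∈ F := by
        rw [add_sub_cancel]
        exact hnuF n
      exact (hF.2 x _ hxM hyM hsumF).1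
    -- Lemma B : generators appearing in a representation of an element of F are in F
    have lemB : ∀ x : V, x ∈ F → ∀ c : V → ℝ, (∀ v, 0 ≤ c v) →
        x = ∑ v ∈ s, c v • v → ∀ v ∈ s, 0 < c v → v ∈ F := by
      intro x hxF c hc hx v hv hcv
      have hxM : x ∈ M := hF.1 hxF
      obtain ⟨n, hn⟩ := exists_nat_ge (1 / c v)
      have h1 : 1 ≤ (n : ℝ) * c v := by
        rw [div_le_iff₀ hcv] at hn; linarith
      have hvrep : v = ∑ u ∈ s, (if u = v then (1 : ℝ) else 0) • u := by
        simp only [ite_smul, one_smul, zero_smul]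
        rw [Finset.sum_ite_eq' s v (fun u => u), if_pos hv]
      have hy : (n : ℝ) • x - v
          = ∑ u ∈ s, ((n : ℝ) * c u - if u = v then 1 else 0) • u := by
        conv_lhs => rw [hx, hvrep]
        rw [Finset.smul_sum, ← Finset.sum_sub_distrib]
        refine Finset.sum_congr rfl fun u _ => ?_
        rw [sub_smul, smul_smul]
      have hyσ : (n : ℝ) • x - v ∈ σ := by
        rw [hy]
        refine Submodule.sum_mem _ fun u hu => ?_
        refine hsmulσ _ ?_ u (hsσ u hu)
        by_cases h : u = v
        · subst h; rw [if_pos rfl]; linarith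
        · rw [if_neg h]
          simp only [sub_zero]
          exact mul_nonneg (Nat.cast_nonneg n) (hc u)
      have hxL : x ∈ L := ((hMx x).mp hxM).1
      have hnxL : (n : ℝ) • x ∈ L := by
        rw [Nat.cast_smul_eq_nsmul]; exact AddSubgroup.nsmul_mem _ hxL n
      have hyM : (n : ℝ) • x - v ∈ M :=
        (hMx _).mpr ⟨AddSubgroup.sub_mem _ hnxL (hsLmem v hv), hyσ⟩
      have hnxF : (n : ℝ) • x ∈ F := by
        rw [Nat.cast_smul_eq_nsmul]; exact AddSubmonoid.nsmul_mem _ hxF n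
      have hsumF : v + ((n : ℝ) • x - v) ∈ F := by
        rw [add_sub_cancel]; exact hnxF
      exact (hF.2 v _ (hsM v hv) hyM hsumF).1
    -- Lemma C : separating functional for each generator not in F
    have lemC : ∀ w ∈ s, w ∉ F → ∃ φ : V →ₗ[ℝ] ℝ,
        (∀ v ∈ s, 0 ≤ φ v) ∧ (∀ v ∈ s₀, φ v = 0) ∧ 0 < φ w := by
      intro w hw hwF
      rcases farkas (ι := ({x // x ∈ s} ⊕ {x // x ∈ s₀}))
          (Sum.elim (fun v => (v : V)) (fun v => -(v : V))) (-w) with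
        ⟨c, hc, hrep⟩ | ⟨φ, hφ, hφw⟩
      · exfalso
        apply hwF
        rw [Fintype.sum_sum_type] at hrep
        simp only [Sum.elim_inl, Sum.elim_inr] at hrep
        set X : V := ∑ i : {x // x ∈ s}, c (.inl i) • (i : V) with hX
        have hXσ : X ∈ σ := Submodule.sum_mem _ fun i _ =>
          hsmulσ _ (hc _) _ (hsσ i i.2)
        set b : V → ℝ := fun v => if h : v ∈ s₀ then c (.inr ⟨v, h⟩) else 0 with hb
        have hbmem : ∀ (v : V) (h : v ∈ s₀), b v = c (.inr ⟨v, h⟩) := by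
          intro v h
          simp only [hb, dif_pos h]
        have hbnn : ∀ v, 0 ≤ b v := by
          intro v
          by_cases h : v ∈ s₀
          · rw [hbmem v h]; exact hc _
          · simp only [hb, dif_neg h]; exact le_refl _
        have h2 : ∑ j : {x // x ∈ s₀}, c (.inr j) • (-(j : V))
            = -∑ v ∈ s₀, b v • v := by
          rw [← Finset.sum_coe_sort s₀ (fun v => b v • v), ← Finset.sum_neg_distrib]
          refine Finset.sum_congr rfl fun j _ => ?_
          rw [smul_neg, hbmem _ j.2, Subtype.coe_eta]
        have hwrep : ∑ v ∈ s₀, b v • v = w + X := by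
          rw [h2] at hrep
          have hthis : -w + ∑ v ∈ s₀, b v • v = X := by rw [hrep]; abel
          rw [← hthis]; abel
        obtain ⟨n, hn⟩ := exists_nat_ge (∑ v ∈ s₀, b v)
        have hbb : ∀ v ∈ s₀, b v ≤ (n : ℝ) := fun v hv =>
          le_trans (Finset.single_le_sum (fun i _ => hbnn i) hv) hn
        have hzσ : (n : ℝ) • u₀ - w ∈ σ := by
          have hz : (n : ℝ) • u₀ - w = (∑ v ∈ s₀, ((n : ℝ) - b v) • v) + X := by
            have e1 : (n : ℝ) • u₀ - ∑ v ∈ s₀, b v • v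
                = ∑ v ∈ s₀, ((n : ℝ) - b v) • v := by
              rw [hu₀, Finset.smul_sum, ← Finset.sum_sub_distrib]
              exact Finset.sum_congr rfl fun v _ => (sub_smul _ _ _).symm
            rw [← e1, hwrep]
            abel
          rw [hz]
          refine Submodule.add_mem _ (Submodule.sum_mem _ fun v hv =>
            hsmulσ _ (sub_nonneg.mpr (hbb v hv)) v (hsσ v (hs₀s hv))) hXσ
        have hzM : (n : ℝ) • u₀ - w ∈ M :=
          (hMx _).mpr ⟨AddSubgroup.sub_mem _ (hnuL n) (hsLmem w hw), hzσ⟩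
        have hsumF : w + ((n : ℝ) • u₀ - w) ∈ F := by
          rw [add_sub_cancel]; exact hnuF n
        exact (hF.2 w _ (hsM w hw) hzM hsumF).1
      · refine ⟨φ, fun v hv => ?_, fun v hv => ?_, ?_⟩
        · simpa using hφ (.inl ⟨v, hv⟩)
        · have h1 : 0 ≤ φ v := by simpa using hφ (.inl ⟨v, hs₀s hv⟩)
          have h2 : 0 ≤ φ (-v) := by simpa using hφ (.inr ⟨v, hv⟩)
          rw [map_neg] at h2
          linarith
        · rw [map_neg] at hφw
          linarith
    -- choose the functionals
    have hchoice : ∀ w : V, ∃ φ : V →ₗ[ℝ] ℝ, w ∈ s₁ →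
        (∀ v ∈ s, 0 ≤ φ v) ∧ (∀ v ∈ s₀, φ v = 0) ∧ 0 < φ w := by
      intro w
      by_cases hw : w ∈ s₁
      · obtain ⟨φ, h1, h2, h3⟩ := lemC w (hs₁s hw) (mem_filter.mp hw).2
        exact ⟨φ, fun _ => ⟨h1, h2, h3⟩⟩
      · exact ⟨0, fun h => absurd h hw⟩
    choose Φ hΦ using hchoice
    set φ : V →ₗ[ℝ] ℝ := ∑ w ∈ s₁, Φ w with hφdef
    have hφapp : ∀ x : V, φ x = ∑ w ∈ s₁, Φ w x := fun x => by
      rw [hφdef, LinearMap.coe_sum, Finset.sum_apply]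
    have hφs : ∀ v ∈ s, 0 ≤ φ v := by
      intro v hv
      rw [hφapp]
      exact Finset.sum_nonneg fun w hw => (hΦ w hw).1 v hv
    have hφs₀ : ∀ v ∈ s₀, φ v = 0 := by
      intro v hv
      rw [hφapp]
      exact Finset.sum_eq_zero fun w hw => (hΦ w hw).2.1 v hv
    have hφs₁ : ∀ v ∈ s₁, 0 < φ v := by
      intro v hv
      rw [hφapp]
      have := Finset.single_le_sum (f := fun w => Φ w v)
        (fun w hw => (hΦ w hw).1 v (hs₁s hv)) hv
      have h3 := (hΦ v hv).2.2
      linarith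
    have hφσ : ∀ x ∈ σ, 0 ≤ φ x := by
      intro x hx
      obtain ⟨c, hc, rfl⟩ := (hmemσ x).mp hx
      rw [map_sum]
      refine Finset.sum_nonneg fun v hv => ?_
      rw [map_smul, smul_eq_mul]
      exact mul_nonneg (hc v) (hφs v hv)
    refine ⟨φ, hφσ, fun x => ⟨fun hxF => ?_, fun ⟨hxM, hφx⟩ => ?_⟩⟩
    · have hxM : x ∈ M := hF.1 hxF
      refine ⟨hxM, ?_⟩
      obtain ⟨c, hc, hx⟩ := (hmemσ x).mp ((hMx x).mp hxM).2
      rw [hx, map_sum]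
      refine Finset.sum_eq_zero fun v hv => ?_
      rw [map_smul, smul_eq_mul]
      rcases eq_or_lt_of_le (hc v) with h | h
      · rw [← h, zero_mul]
      · have hvF : v ∈ F := lemB x hxF c hc hx v hv h
        rw [hφs₀ v (mem_filter.mpr ⟨hv, hvF⟩), mul_zero]
    · obtain ⟨c, hc, hx⟩ := (hmemσ x).mp ((hMx x).mp hxM).2
      have hφxsum : ∑ v ∈ s, c v * φ v = 0 := by
        rw [← hφx, hx, map_sum]
        exact Finset.sum_congr rfl fun v hv => by rw [map_smul, smul_eq_mul]
      have hterm : ∀ v ∈ s, c v * φ v = 0 := by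
        intro v hv
        have := (Finset.sum_eq_zero_iff_of_nonneg
          (fun u hu => mul_nonneg (hc u) (hφs u hu))).mp hφxsum
        exact this v hv
      have hc₁ : ∀ v ∈ s₁, c v = 0 := by
        intro v hv
        have h1 := hterm v (hs₁s hv)
        have h2 := hφs₁ v hv
        rcases mul_eq_zero.mp h1 with h | h
        · exact h
        · exact absurd h (ne_of_gt h2)
      have hx₀ : x = ∑ v ∈ s₀, c v • v := by
        have hsplit := Finset.sum_filter_add_sum_filter_not s (fun v => v ∈ F)
          (fun v => c v • v)
        rw [← hs₀, ← hs₁] at hsplit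
        have hzero : ∑ v ∈ s₁, c v • v = 0 :=
          Finset.sum_eq_zero fun v hv => by rw [hc₁ v hv, zero_smul]
        rw [hx, ← hsplit, hzero, add_zero]
      exact lemA x hxM c hc hx₀
  · -- easy direction
    rintro ⟨φ, hφσ, hφF⟩
    constructor
    · intro x hx
      exact ((hφF x).mp hx).1
    · intro a b ha hb hab
      obtain ⟨habM, hφab⟩ := (hφF _).mp hab
      have haσ : a ∈ σ := ((hMx a).mp ha).2
      have hbσ : b ∈ σ := ((hMx b).mp hb).2
      have ha' : 0 ≤ φ a := hφσ a haσ
      have hb' : 0 ≤ φ b := hφσ b hbσ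
      rw [map_add] at hφab
      have hφa : φ a = 0 := by linarith
      have hφb : φ b = 0 := by linarith
      exact ⟨(hφF a).mpr ⟨ha, hφa⟩, (hφF b).mpr ⟨hb, hφb⟩⟩
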